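/- The generalized survival function equals μ_j exactly on the interval [min_{k ≤ φ*(j)} A_{⟨k⟩}, min_{k < φ_*(j)} A_{⟨k⟩}): that is, μ_𝒜(x, α) = μ_j for all α in this interval, and for α outside it with α ≥ 0, μ_𝒜(x, α) ≠ μ_j whenever μ_j differs from the other measure values involved. In particular the value μ_j is attained by μ_𝒜(x, ·) if and only if min_{k ≤ φ*(j)} A_{⟨k⟩} < min_{k < φ_*(j)} A_{⟨k⟩}. -/
import Mathlib


open scoped Classical

/-- `𝒜` is a family of conditional aggregation operators (FCA) with respect to the
collection `𝓔`: every operator is nonnegative, monotone in the coordinates of the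
conditioning set, vanishes on the indicator of the complement, and `𝒜(·|∅) = 0`. -/
def IsFCA (n : ℕ) (𝓔 : Finset (Finset (Fin n)))
    (𝒜 : Finset (Fin n) → (Fin n → ℝ) → ℝ) : Prop :=
  (∀ E ∈ 𝓔, ∀ x : Fin n → ℝ, 0 ≤ 𝒜 E x) ∧
  (∀ E ∈ 𝓔, E ≠ ∅ → ∀ x y : Fin n → ℝ, (∀ i ∈ E, x i ≤ y i) → 𝒜 E x ≤ 𝒜 E y) ∧
  (∀ E ∈ 𝓔, E ≠ ∅ → 𝒜 E (fun i => if i ∈ E then 0 else 1) = 0) ∧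
  (∀ x : Fin n → ℝ, 𝒜 ∅ x = 0)

/-- `μ` is a monotone measure on the complements of the sets of `𝓔`:
`μ ∅ = 0`, nonnegative, and monotone. -/
def IsMonMeasure (n : ℕ) (𝓔 : Finset (Finset (Fin n)))
    (μ : Finset (Fin n) → ℝ) : Prop :=
  μ ∅ = 0 ∧ (∀ E ∈ 𝓔, 0 ≤ μ Eᶜ) ∧
  (∀ E ∈ 𝓔, ∀ F ∈ 𝓔, Eᶜ ⊆ Fᶜ → μ Eᶜ ≤ μ Fᶜ)

/-- The generalized survival function
`μ_𝒜(x, α) = min { μ(Eᶜ) : 𝒜(x|E) ≤ α, E ∈ 𝓔 }`. -/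
noncomputable def gsf {n : ℕ} (𝓔 : Finset (Finset (Fin n)))
    (𝒜 : Finset (Fin n) → (Fin n → ℝ) → ℝ)
    (μ : Finset (Fin n) → ℝ) (x : Fin n → ℝ) (α : ℝ) : ℝ :=
  sInf {m : ℝ | ∃ E ∈ 𝓔, 𝒜 E x ≤ α ∧ m = μ Eᶜ}

/-- `φ*(j) = max{k : μ_k = μ_j}`. -/
noncomputable def phiStar {κ : ℕ} (μ : Fin κ → ℝ) (j : Fin κ) : Fin κ :=
  (Finset.univ.filter fun k => μ k = μ j).max' ⟨j, by simp⟩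

/-- `φ_*(j) = min{k : μ_k = μ_j}`. -/
noncomputable def phiLow {κ : ℕ} (μ : Fin κ → ℝ) (j : Fin κ) : Fin κ :=
  (Finset.univ.filter fun k => μ k = μ j).min' ⟨j, by simp⟩

lemma phiStar_spec {κ : ℕ} (μ : Fin κ → ℝ) (j : Fin κ) : μ (phiStar μ j) = μ j := by
  have h := Finset.max'_mem (Finset.univ.filter fun k => μ k = μ j) ⟨j, by simp⟩
  exact (Finset.mem_filter.mp h).2

lemma le_phiStar {κ : ℕ} (μ : Fin κ → ℝ) {j k : Fin κ} (h : μ k = μ j) : k ≤ phiStar μ j :=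
  Finset.le_max' _ _ (by simp [h])

lemma phiLow_spec {κ : ℕ} (μ : Fin κ → ℝ) (j : Fin κ) : μ (phiLow μ j) = μ j := by
  have h := Finset.min'_mem (Finset.univ.filter fun k => μ k = μ j) ⟨j, by simp⟩
  exact (Finset.mem_filter.mp h).2

lemma phiLow_le {κ : ℕ} (μ : Fin κ → ℝ) {j k : Fin κ} (h : μ k = μ j) : phiLow μ j ≤ k :=
  Finset.min'_le _ _ (by simp [h])

/-- Proposition (najgsf): `μ_𝒜(x,·)` equals `μ_j` exactly on
`[min_{k ≤ φ*(j)} A_⟨k⟩, min_{k < φ_*(j)} A_⟨k⟩)` (min over the empty set `= +∞`),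
and in particular the value `μ_j` is attained iff this interval is nonempty, i.e.
iff `min_{k ≤ φ*(j)} A_⟨k⟩ < min_{k < φ_*(j)} A_⟨k⟩`. -/
theorem stmt17 {n κ : ℕ} (𝓔 : Finset (Finset (Fin n)))
    (𝒜 : Finset (Fin n) → (Fin n → ℝ) → ℝ) (μ : Finset (Fin n) → ℝ)
    (x : Fin n → ℝ)
    (hempty : ∅ ∈ 𝓔) (hU : (Finset.univ : Finset (Fin n)) ∈ 𝓔)
    (hA : IsFCA n 𝓔 𝒜) (hμ : IsMonMeasure n 𝓔 μ) (hx : ∀ i, 0 ≤ x i)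
    (hκ : 𝓔.card = κ)
    (Fstar : Fin κ → Finset (Fin n))
    (hFmem : ∀ j, (Fstar j)ᶜ ∈ 𝓔) (hFinj : Function.Injective Fstar)
    (hμmono : ∀ i j : Fin κ, i ≤ j → μ (Fstar i) ≤ μ (Fstar j))
    (j : Fin κ) :
    (∀ α : ℝ,
        sInf {m : ℝ | ∃ k : Fin κ, k ≤ phiStar (fun k => μ (Fstar k)) j ∧
            m = 𝒜 (Fstar k)ᶜ x} ≤ α →
        (∀ k : Fin κ, k < phiLow (fun k => μ (Fstar k)) j → α < 𝒜 (Fstar k)ᶜ x) →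
        gsf 𝓔 𝒜 μ x α = μ (Fstar j)) ∧
    (∀ α : ℝ, 0 ≤ α → gsf 𝓔 𝒜 μ x α = μ (Fstar j) →
        sInf {m : ℝ | ∃ k : Fin κ, k ≤ phiStar (fun k => μ (Fstar k)) j ∧
            m = 𝒜 (Fstar k)ᶜ x} ≤ α ∧
        ∀ k : Fin κ, k < phiLow (fun k => μ (Fstar k)) j → α < 𝒜 (Fstar k)ᶜ x) ∧
    ((∃ α : ℝ, 0 ≤ α ∧ gsf 𝓔 𝒜 μ x α = μ (Fstar j)) ↔
      ∃ α : ℝ,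
        sInf {m : ℝ | ∃ k : Fin κ, k ≤ phiStar (fun k => μ (Fstar k)) j ∧
            m = 𝒜 (Fstar k)ᶜ x} ≤ α ∧
        ∀ k : Fin κ, k < phiLow (fun k => μ (Fstar k)) j → α < 𝒜 (Fstar k)ᶜ x) := by
    classical
  have hA0 : ∀ k : Fin κ, 0 ≤ 𝒜 (Fstar k)ᶜ x := fun k => hA.1 _ (hFmem k) x
  -- surjectivity of k ↦ (Fstar k)ᶜ onto 𝓔
  have hsurj : ∀ E ∈ 𝓔, ∃ k : Fin κ, (Fstar k)ᶜ = E := by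
    intro E hE
    have hinj : Function.Injective (fun k : Fin κ => (Fstar k)ᶜ) := fun a b h =>
      hFinj (compl_injective h)
    have himg : (Finset.univ.image fun k : Fin κ => (Fstar k)ᶜ) = 𝓔 := by
      apply Finset.eq_of_subset_of_card_le
      · intro E' hE'
        obtain ⟨k, -, rfl⟩ := Finset.mem_image.mp hE'
        exact hFmem k
      · rw [Finset.card_image_of_injective _ hinj, Finset.card_univ, Fintype.card_fin, hκ]
    rw [← himg] at hE
    obtain ⟨k, -, hk⟩ := Finset.mem_image.mp hE
    exact ⟨k, hk⟩
  obtain ⟨k0, hk0⟩ := hsurj ∅ hempty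
  have hAk0 : 𝒜 (Fstar k0)ᶜ x = 0 := by rw [hk0]; exact hA.2.2.2 x
  set g : Fin κ → ℝ := fun k => μ (Fstar k) with hg
  have hgj : g j = μ (Fstar j) := rfl
  have hjP : j ≤ phiStar g j := le_phiStar g rfl
  have hpj : phiLow g j ≤ j := phiLow_le g rfl
  have hbetween : ∀ k, phiLow g j ≤ k → k ≤ phiStar g j → g k = g j := by
    intro k h1 h2
    refine le_antisymm ?_ ?_
    · calc g k ≤ g (phiStar g j) := hμmono _ _ h2
        _ = g j := phiStar_spec g j
    · calc g j = g (phiLow g j) := (phiLow_spec g j).symm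
        _ ≤ g k := hμmono _ _ h1
  -- the finite set behind the sInf in the statement
  set TB : Finset ℝ := (Finset.univ.filter fun k => k ≤ phiStar g j).image
      fun k => 𝒜 (Fstar k)ᶜ x with hTB
  have hBset : {m : ℝ | ∃ k : Fin κ, k ≤ phiStar g j ∧ m = 𝒜 (Fstar k)ᶜ x} = ↑TB := by
    ext m
    simp only [hTB, Set.mem_setOf_eq, Finset.coe_image, Set.mem_image, Finset.mem_coe,
      Finset.mem_filter, Finset.mem_univ, true_and]
    exact ⟨fun ⟨k, h1, h2⟩ => ⟨k, h1, h2.symm⟩, fun ⟨k, h1, h2⟩ => ⟨k, h1, h2.symm⟩⟩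
  have hTBne : TB.Nonempty :=
    ⟨𝒜 (Fstar (phiStar g j))ᶜ x, Finset.mem_image.mpr ⟨phiStar g j, by simp, rfl⟩⟩
  have hBinf : sInf {m : ℝ | ∃ k : Fin κ, k ≤ phiStar g j ∧ m = 𝒜 (Fstar k)ᶜ x}
      = TB.min' hTBne := by rw [hBset]; exact hTBne.csInf_eq_min'
  obtain ⟨kP, hkP, hkPeq⟩ : ∃ k : Fin κ, k ≤ phiStar g j ∧
      𝒜 (Fstar k)ᶜ x = TB.min' hTBne := by
    have := TB.min'_mem hTBne
    obtain ⟨k, hk, hk2⟩ := Finset.mem_image.mp this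
    exact ⟨k, (Finset.mem_filter.mp hk).2, hk2⟩
  have hBle : ∀ k : Fin κ, k ≤ phiStar g j → TB.min' hTBne ≤ 𝒜 (Fstar k)ᶜ x := by
    intro k hk
    exact TB.min'_le _ (Finset.mem_image.mpr ⟨k, by simp [hk], rfl⟩)
  -- the value of gsf at a point where the minimal satisfying index is known
  have hgsf : ∀ α : ℝ, ∀ kk : Fin κ, 𝒜 (Fstar kk)ᶜ x ≤ α →
      (∀ k, 𝒜 (Fstar k)ᶜ x ≤ α → kk ≤ k) → gsf 𝓔 𝒜 μ x α = μ (Fstar kk) := by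
    intro α kk h1 h2
    have hset : {m : ℝ | ∃ E ∈ 𝓔, 𝒜 E x ≤ α ∧ m = μ Eᶜ}
        = {m : ℝ | ∃ k : Fin κ, 𝒜 (Fstar k)ᶜ x ≤ α ∧ m = μ (Fstar k)} := by
      ext m
      constructor
      · rintro ⟨E, hE, hle, rfl⟩
        obtain ⟨k, rfl⟩ := hsurj E hE
        exact ⟨k, hle, by rw [compl_compl]⟩
      · rintro ⟨k, hle, rfl⟩
        exact ⟨(Fstar k)ᶜ, hFmem k, hle, by rw [compl_compl]⟩
    rw [gsf, hset]
    apply IsLeast.csInf_eq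
    refine ⟨⟨kk, h1, rfl⟩, ?_⟩
    rintro m ⟨k, hk, rfl⟩
    exact hμmono _ _ (h2 k hk)
  have part1 : ∀ α : ℝ,
      sInf {m : ℝ | ∃ k : Fin κ, k ≤ phiStar g j ∧ m = 𝒜 (Fstar k)ᶜ x} ≤ α →
      (∀ k : Fin κ, k < phiLow g j → α < 𝒜 (Fstar k)ᶜ x) →
      gsf 𝓔 𝒜 μ x α = μ (Fstar j) := by
    intro α h1 h2
    rw [hBinf] at h1
    have hkPα : 𝒜 (Fstar kP)ᶜ x ≤ α := hkPeq ▸ h1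
    have hTne : (Finset.univ.filter fun k => 𝒜 (Fstar k)ᶜ x ≤ α).Nonempty :=
      ⟨kP, by simp [hkPα]⟩
    set kmin := (Finset.univ.filter fun k => 𝒜 (Fstar k)ᶜ x ≤ α).min' hTne with hkmin
    have hkminα : 𝒜 (Fstar kmin)ᶜ x ≤ α :=
      (Finset.mem_filter.mp (Finset.min'_mem _ hTne)).2
    have hminle : ∀ k, 𝒜 (Fstar k)ᶜ x ≤ α → kmin ≤ k := fun k hk =>
      Finset.min'_le _ _ (by simp [hk])
    have h3 : kmin ≤ phiStar g j := le_trans (hminle kP hkPα) hkP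
    have h4 : phiLow g j ≤ kmin := by
      by_contra h
      exact absurd hkminα (not_le.mpr (h2 kmin (not_le.mp h)))
    have := hbetween kmin h4 h3
    calc gsf 𝓔 𝒜 μ x α = μ (Fstar kmin) := hgsf α kmin hkminα hminle
      _ = μ (Fstar j) := this
  have part2 : ∀ α : ℝ, 0 ≤ α → gsf 𝓔 𝒜 μ x α = μ (Fstar j) →
      sInf {m : ℝ | ∃ k : Fin κ, k ≤ phiStar g j ∧ m = 𝒜 (Fstar k)ᶜ x} ≤ α ∧
      ∀ k : Fin κ, k < phiLow g j → α < 𝒜 (Fstar k)ᶜ x := by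
    intro α hα hval
    have hTne : (Finset.univ.filter fun k => 𝒜 (Fstar k)ᶜ x ≤ α).Nonempty :=
      ⟨k0, by simp [hAk0, hα]⟩
    set kmin := (Finset.univ.filter fun k => 𝒜 (Fstar k)ᶜ x ≤ α).min' hTne with hkmin
    have hkminα : 𝒜 (Fstar kmin)ᶜ x ≤ α :=
      (Finset.mem_filter.mp (Finset.min'_mem _ hTne)).2
    have hminle : ∀ k, 𝒜 (Fstar k)ᶜ x ≤ α → kmin ≤ k := fun k hk =>
      Finset.min'_le _ _ (by simp [hk])
    have hveq : g kmin = g j := by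
      have := hgsf α kmin hkminα hminle
      rw [hval] at this
      exact this.symm
    constructor
    · rw [hBinf]
      exact le_trans (hBle kmin (le_phiStar g hveq)) hkminα
    · intro k hk
      by_contra h
      have h1 : kmin ≤ k := hminle k (not_lt.mp h)
      have h2 : phiLow g j ≤ kmin := phiLow_le g hveq
      exact absurd (lt_of_lt_of_le hk (le_trans h2 h1)) (lt_irrefl k)
  have hBnn : (0:ℝ) ≤ sInf {m : ℝ | ∃ k : Fin κ, k ≤ phiStar g j ∧ m = 𝒜 (Fstar k)ᶜ x} := by
    rw [hBinf, ← hkPeq]; exact hA0 kP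
  refine ⟨part1, part2, ?_⟩
  constructor
  · rintro ⟨α, hα, hval⟩
    exact ⟨α, part2 α hα hval⟩
  · rintro ⟨α, h1, h2⟩
    exact ⟨α, le_trans hBnn h1, part1 α h1 h2⟩
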